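/- Let g : ℝ^d → ℝ^d (d ≥ 1) be a continuous, linearly homogeneous map. Suppose there exists δ > 0 such that g^n(x) → 0 as n → ∞ for all x ∈ B_δ(0). Then the convergence g^n(x) → 0 is uniform on B_δ(0); that is, for every ε > 0 there exists N such that ‖g^n(x)‖ < ε for all n ≥ N and all x ∈ B_δ(0). -/

import Mathlib

open Metric Filter

set_option maxHeartbeats 1000000 in
theorem stmt3 {d : ℕ} (hd : 0 < d)
    (g : EuclideanSpace ℝ (Fin d) → EuclideanSpace ℝ (Fin d))
    (hg : Continuous g)
    (hhom : ∀ α : ℝ, 0 ≤ α → ∀ x : EuclideanSpace ℝ (Fin d), g (α • x) = α • g x)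
    (δ : ℝ) (hδ : 0 < δ)
    (hconv : ∀ x ∈ ball (0 : EuclideanSpace ℝ (Fin d)) δ,
      Tendsto (fun n : ℕ => g^[n] x) atTop (nhds (0 : EuclideanSpace ℝ (Fin d)))) :
    ∀ ε > (0 : ℝ), ∃ N : ℕ, ∀ n ≥ N, ∀ x ∈ ball (0 : EuclideanSpace ℝ (Fin d)) δ,
      ‖g^[n] x‖ < ε := by
  -- iterates are homogeneous
  have hiter : ∀ n : ℕ, ∀ α : ℝ, 0 ≤ α → ∀ x : EuclideanSpace ℝ (Fin d), g^[n] (α • x) = α • g^[n] x := by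
    intro n
    induction n with
    | zero => intro α hα x; simp
    | succ n ih =>
      intro α hα x
      rw [Function.iterate_succ_apply, Function.iterate_succ_apply, hhom α hα, ih α hα]
  have g0 : g 0 = 0 := by
    have := hhom 0 le_rfl 0
    simpa using this
  have giter0 : ∀ n : ℕ, g^[n] (0 : EuclideanSpace ℝ (Fin d)) = 0 := by
    intro n
    have := hiter n 0 le_rfl 0
    simpa using this
  -- bound on closed unit ball
  obtain ⟨C0, hC0⟩ := (isCompact_closedBall (0 : EuclideanSpace ℝ (Fin d)) 1).exists_bound_of_continuousOn
    hg.continuousOn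
  set M : ℝ := max C0 1 with hMdef
  have hM1 : (1 : ℝ) ≤ M := le_max_right _ _
  have hM0 : (0 : ℝ) < M := lt_of_lt_of_le one_pos hM1
  have hM : ∀ x : EuclideanSpace ℝ (Fin d), ‖g x‖ ≤ M * ‖x‖ := by
    intro x
    rcases eq_or_ne x 0 with rfl | hx
    · simp [g0]
    · have hxn : (0 : ℝ) < ‖x‖ := norm_pos_iff.mpr hx
      have hunit : ‖x‖⁻¹ • x ∈ closedBall (0 : EuclideanSpace ℝ (Fin d)) 1 := by
        simp [mem_closedBall, dist_eq_norm, norm_smul, abs_of_nonneg (inv_nonneg.mpr hxn.le),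
          inv_mul_cancel₀ hxn.ne']
      have h1 : g x = ‖x‖ • g (‖x‖⁻¹ • x) := by
        rw [← hhom _ hxn.le, smul_inv_smul₀ hxn.ne']
      calc ‖g x‖ = ‖x‖ * ‖g (‖x‖⁻¹ • x)‖ := by
            rw [h1, norm_smul, Real.norm_eq_abs, abs_of_pos hxn]
        _ ≤ ‖x‖ * M := by
            exact mul_le_mul_of_nonneg_left (le_trans (hC0 _ hunit) (le_max_left _ _)) hxn.le
        _ = M * ‖x‖ := mul_comm _ _
  have hMn : ∀ n : ℕ, ∀ x : EuclideanSpace ℝ (Fin d), ‖g^[n] x‖ ≤ M ^ n * ‖x‖ := by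
    intro n
    induction n with
    | zero => intro x; simp
    | succ n ih =>
      intro x
      rw [Function.iterate_succ_apply]
      calc ‖g^[n] (g x)‖ ≤ M ^ n * ‖g x‖ := ih _
        _ ≤ M ^ n * (M * ‖x‖) := by
            exact mul_le_mul_of_nonneg_left (hM x) (pow_nonneg hM0.le n)
        _ = M ^ (n + 1) * ‖x‖ := by ring
  -- convergence everywhere
  have hconv' : ∀ x : EuclideanSpace ℝ (Fin d), Tendsto (fun n : ℕ => g^[n] x) atTop (nhds 0) := by
    intro x
    set c : ℝ := δ / (2 * (‖x‖ + 1)) with hc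
    have hx1 : (0 : ℝ) < ‖x‖ + 1 := by positivity
    have hcpos : (0 : ℝ) < c := by positivity
    have hmem : c • x ∈ ball (0 : EuclideanSpace ℝ (Fin d)) δ := by
      simp only [mem_ball, dist_eq_norm, sub_zero, norm_smul, Real.norm_eq_abs,
        abs_of_pos hcpos]
      calc c * ‖x‖ < c * (2 * (‖x‖ + 1)) := by nlinarith [norm_nonneg x]
        _ = δ := by rw [hc]; exact div_mul_cancel₀ δ (by positivity)
    have h1 := hconv _ hmem
    have h2 : Tendsto (fun n : ℕ => c⁻¹ • g^[n] (c • x)) atTop (nhds (c⁻¹ • (0:EuclideanSpace ℝ (Fin d)))) :=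
      h1.const_smul c⁻¹
    simp only [smul_zero] at h2
    convert h2 using 2 with n
    rw [hiter n c hcpos.le, inv_smul_smul₀ hcpos.ne']
  -- key: uniform contraction time on the sphere
  set S : Set (EuclideanSpace ℝ (Fin d)) := sphere (0 : EuclideanSpace ℝ (Fin d)) 1 with hS
  have hsph : ∀ x : EuclideanSpace ℝ (Fin d), x ∈ S → ∃ n : ℕ, ‖g^[n + 1] x‖ < 1/2 := by
    intro x hx
    have := (hconv' x).comp (tendsto_add_atTop_nat 1)
    have h2 : Tendsto (fun n : ℕ => ‖g^[n + 1] x‖) atTop (nhds 0) := by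
      simpa [Function.comp] using this.norm
    have := (h2.eventually (eventually_lt_nhds (by norm_num : (0:ℝ) < 1/2))).exists
    obtain ⟨n, hn⟩ := this
    exact ⟨n, hn⟩
  classical
  choose nf hnf using hsph
  have hScompact : IsCompact S := isCompact_sphere _ _
  set U : S → Set (EuclideanSpace ℝ (Fin d)) := fun i => {y | ‖g^[nf i.1 i.2 + 1] y‖ < 1/2} with hU
  have hUopen : ∀ i : S, IsOpen (U i) := by
    intro i
    exact isOpen_lt ((hg.iterate _).norm) continuous_const
  have hcover : S ⊆ ⋃ i : S, U i := by
    intro x hx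
    exact Set.mem_iUnion.mpr ⟨⟨x, hx⟩, hnf x hx⟩
  obtain ⟨t, ht⟩ := hScompact.elim_finite_subcover U hUopen hcover
  set N0 : ℕ := max (t.sup fun i => nf i.1 i.2 + 1) 1 with hN0
  have hN0pos : 1 ≤ N0 := le_max_right _ _
  have hkey : ∀ x : EuclideanSpace ℝ (Fin d), ‖x‖ = 1 → ∃ m : ℕ, 1 ≤ m ∧ m ≤ N0 ∧ ‖g^[m] x‖ ≤ 1/2 := by
    intro x hx
    have hxS : x ∈ S := by simp [hS, mem_sphere_iff_norm, hx]
    obtain ⟨i, hi⟩ := Set.mem_iUnion.mp (ht hxS)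
    obtain ⟨hit, hiU⟩ := Set.mem_iUnion.mp hi
    refine ⟨nf i.1 i.2 + 1, Nat.succ_le_succ (Nat.zero_le _), ?_, le_of_lt hiU⟩
    calc nf i.1 i.2 + 1 ≤ t.sup (fun i => nf i.1 i.2 + 1) := Finset.le_sup (f := fun j => nf j.1 j.2 + 1) hit
      _ ≤ N0 := le_max_left _ _
  -- the geometric bound
  set C : ℝ := M ^ N0 with hCdef
  have hC1 : (1 : ℝ) ≤ C := one_le_pow₀ hM1
  have hCpos : (0 : ℝ) < C := lt_of_lt_of_le one_pos hC1
  have hbound : ∀ n : ℕ, ∀ x : EuclideanSpace ℝ (Fin d), ‖x‖ ≤ 1 → ‖g^[n] x‖ ≤ C * (1/2 : ℝ) ^ (n / N0) * ‖x‖ := by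
    intro n
    induction n using Nat.strong_induction_on with
    | _ n ih =>
      intro x hx
      by_cases hn : n < N0
      · have : n / N0 = 0 := Nat.div_eq_of_lt hn
        rw [this, pow_zero, mul_one]
        calc ‖g^[n] x‖ ≤ M ^ n * ‖x‖ := hMn n x
          _ ≤ C * ‖x‖ := by
              apply mul_le_mul_of_nonneg_right _ (norm_nonneg x)
              exact pow_le_pow_right₀ hM1 (le_of_lt hn) |>.trans_eq rfl
      · push_neg at hn
        rcases eq_or_ne x 0 with rfl | hx0
        · simp [giter0]
        · have hxn : (0 : ℝ) < ‖x‖ := norm_pos_iff.mpr hx0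
          obtain ⟨m, hm1, hmN, hmc⟩ := hkey (‖x‖⁻¹ • x) (by
            simp [norm_smul, abs_of_nonneg (inv_nonneg.mpr hxn.le),
              inv_mul_cancel₀ hxn.ne'])
          set y : EuclideanSpace ℝ (Fin d) := g^[m] x with hy
          have hyval : y = ‖x‖ • g^[m] (‖x‖⁻¹ • x) := by
            rw [hy, ← hiter m _ hxn.le, smul_inv_smul₀ hxn.ne']
          have hynorm : ‖y‖ ≤ ‖x‖ / 2 := by
            rw [hyval, norm_smul, Real.norm_eq_abs, abs_of_pos hxn]
            calc ‖x‖ * ‖g^[m] (‖x‖⁻¹ • x)‖ ≤ ‖x‖ * (1/2) :=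
                  mul_le_mul_of_nonneg_left hmc hxn.le
              _ = ‖x‖ / 2 := by ring
          have hy1 : ‖y‖ ≤ 1 := le_trans hynorm (by linarith)
          have hnm : n - m < n := Nat.sub_lt (lt_of_lt_of_le one_pos (le_trans hm1 (le_trans hmN hn))) hm1
          have hsplit : g^[n] x = g^[n - m] y := by
            rw [hy, ← Function.iterate_add_apply]
            congr 1
            omega
          have hIH := ih (n - m) hnm y hy1
          have hdiv : n / N0 ≤ (n - m) / N0 + 1 := by
            have h1 : n ≤ (n - m) + N0 := by omega
            calc n / N0 ≤ ((n - m) + N0) / N0 := Nat.div_le_div_right h1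
              _ = (n - m) / N0 + 1 := Nat.add_div_right _ (lt_of_lt_of_le one_pos hN0pos)
          have hpow : ((1:ℝ)/2) ^ ((n - m) / N0 + 1) ≤ (1/2 : ℝ) ^ (n / N0) := by
            apply pow_le_pow_of_le_one (by norm_num) (by norm_num) hdiv
          calc ‖g^[n] x‖ = ‖g^[n - m] y‖ := by rw [hsplit]
            _ ≤ C * (1/2 : ℝ) ^ ((n - m) / N0) * ‖y‖ := hIH
            _ ≤ C * (1/2 : ℝ) ^ ((n - m) / N0) * (‖x‖ / 2) := by
                apply mul_le_mul_of_nonneg_left hynorm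
                positivity
            _ = C * ((1/2 : ℝ) ^ ((n - m) / N0 + 1)) * ‖x‖ := by ring
            _ ≤ C * (1/2 : ℝ) ^ (n / N0) * ‖x‖ := by
                apply mul_le_mul_of_nonneg_right _ (norm_nonneg x)
                exact mul_le_mul_of_nonneg_left hpow hCpos.le
  -- conclude
  intro ε hε
  obtain ⟨k, hk⟩ := exists_pow_lt_of_lt_one (show (0:ℝ) < ε / (C * δ) by positivity)
    (by norm_num : (1/2 : ℝ) < 1)
  refine ⟨N0 * (k + 1), fun n hn x hxball => ?_⟩
  have hxδ : ‖x‖ < δ := by simpa [mem_ball, dist_eq_norm] using hxball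
  set z : EuclideanSpace ℝ (Fin d) := δ⁻¹ • x with hz
  have hz1 : ‖z‖ ≤ 1 := by
    rw [hz, norm_smul, Real.norm_eq_abs, abs_of_pos (inv_pos.mpr hδ)]
    rw [inv_mul_le_iff₀ hδ]
    linarith
  have hxz : x = δ • z := by rw [hz, smul_inv_smul₀ hδ.ne']
  have h1 : ‖g^[n] x‖ = δ * ‖g^[n] z‖ := by
    rw [hxz, hiter n δ hδ.le, norm_smul, Real.norm_eq_abs, abs_of_pos hδ]
  have h2 : n / N0 ≥ k + 1 := by
    calc k + 1 = (N0 * (k + 1)) / N0 := by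
          rw [Nat.mul_div_cancel_left _ (lt_of_lt_of_le one_pos hN0pos)]
      _ ≤ n / N0 := Nat.div_le_div_right hn
  have hpow2 : ((1:ℝ)/2) ^ (n / N0) ≤ (1/2 : ℝ) ^ k :=
    pow_le_pow_of_le_one (by norm_num) (by norm_num) (by omega)
  calc ‖g^[n] x‖ = δ * ‖g^[n] z‖ := h1
    _ ≤ δ * (C * (1/2 : ℝ) ^ (n / N0) * ‖z‖) := mul_le_mul_of_nonneg_left (hbound n z hz1) hδ.le
    _ ≤ δ * (C * (1/2 : ℝ) ^ k * 1) := by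
        apply mul_le_mul_of_nonneg_left _ hδ.le
        apply mul_le_mul (mul_le_mul_of_nonneg_left hpow2 hCpos.le) hz1 (norm_nonneg z)
        positivity
    _ = C * δ * (1/2 : ℝ) ^ k := by ring
    _ < C * δ * (ε / (C * δ)) := by
        apply mul_lt_mul_of_pos_left hk
        positivity
    _ = ε := by field_simp
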